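/- Let m, n ≥ 0 and N = m + n. Let U = span{e₁,…,e_m} and W = span{e_{m+1},…,e_N} be the standard coordinate subspaces of ℂᴺ. For every chain of subspaces 0 = W₀ ⊆ W₁ ⊆ ⋯ ⊆ W_k = ℂᴺ, the set {g ∈ GL(N,ℂ) : g(U) = U, g(W) = W, det(g|_U) = 1, and g(W_j) = W_j for all j} is a connected subset of the space of N×N complex matrices. (In other words, the subgroup SL(m)×GL(n) ⊂ GL(m+n) is parabolically connected.) -/

import Mathlib

/-- The coordinate subspace of `ℂ^{m+n}` spanned by the first `m` standard basis vectors. -/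
noncomputable def stdU (m n : ℕ) : Submodule ℂ (Fin (m + n) → ℂ) :=
  Submodule.span ℂ (Set.range fun i : Fin m => (Pi.single (Fin.castAdd n i) 1 : Fin (m + n) → ℂ))

/-- The coordinate subspace of `ℂ^{m+n}` spanned by the last `n` standard basis vectors. -/
noncomputable def stdW (m n : ℕ) : Submodule ℂ (Fin (m + n) → ℂ) :=
  Submodule.span ℂ (Set.range fun i : Fin n => (Pi.single (Fin.natAdd m i) 1 : Fin (m + n) → ℂ))

namespace SLGL

variable {m n : ℕ}

noncomputable def KU (m n : ℕ) : Submodule ℂ (Fin (m + n) → ℂ) where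
  carrier := {x | ∀ i : Fin n, x (Fin.natAdd m i) = 0}
  add_mem' := by intro a b ha hb i; simp [ha i, hb i]
  zero_mem' := by intro i; simp
  smul_mem' := by intro c a ha i; simp [ha i]

noncomputable def KW (m n : ℕ) : Submodule ℂ (Fin (m + n) → ℂ) where
  carrier := {x | ∀ i : Fin m, x (Fin.castAdd n i) = 0}
  add_mem' := by intro a b ha hb i; simp [ha i, hb i]
  zero_mem' := by intro i; simp
  smul_mem' := by intro c a ha i; simp [ha i]

lemma castAdd_ne_natAdd (i : Fin m) (j : Fin n) : Fin.castAdd n i ≠ Fin.natAdd m j := by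
  simp [Fin.ext_iff]; omega

lemma natAdd_ne_castAdd (j : Fin n) (i : Fin m) : Fin.natAdd m j ≠ Fin.castAdd n i := by
  simp [Fin.ext_iff]; omega

lemma sum_single_eq (x : Fin (m + n) → ℂ) (hx : ∀ i : Fin n, x (Fin.natAdd m i) = 0) :
    ∑ i : Fin m, x (Fin.castAdd n i) • (Pi.single (Fin.castAdd n i) 1 : Fin (m + n) → ℂ) = x := by
  funext j
  rw [Finset.sum_apply]
  induction j using Fin.addCases with
  | left j =>
    rw [Finset.sum_eq_single j]
    · simp
    · intro b _ hb
      have hne : Fin.castAdd n j ≠ Fin.castAdd n b :=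
        fun h => hb ((Fin.castAdd_injective m n h).symm ▸ rfl)
      simp [Pi.single_eq_of_ne hne]
    · simp
  | right j =>
    rw [hx j]
    apply Finset.sum_eq_zero
    intro b _
    simp [Pi.single_eq_of_ne (natAdd_ne_castAdd j b)]

lemma stdU_eq : stdU m n = KU m n := by
  apply le_antisymm
  · rw [stdU, Submodule.span_le]
    rintro _ ⟨i, rfl⟩ j
    exact Pi.single_eq_of_ne (natAdd_ne_castAdd j i) 1
  · intro x hx
    rw [← sum_single_eq x hx]
    exact Submodule.sum_mem _ fun i _ => Submodule.smul_mem _ _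
      (Submodule.subset_span ⟨i, rfl⟩)

lemma natAdd_injective {a b : Fin n} (h : Fin.natAdd m a = Fin.natAdd m b) : a = b := by
  simp [Fin.ext_iff] at *; omega

lemma sum_single_eq' (x : Fin (m + n) → ℂ) (hx : ∀ i : Fin m, x (Fin.castAdd n i) = 0) :
    ∑ i : Fin n, x (Fin.natAdd m i) • (Pi.single (Fin.natAdd m i) 1 : Fin (m + n) → ℂ) = x := by
  funext j
  rw [Finset.sum_apply]
  induction j using Fin.addCases with
  | left j =>
    rw [hx j]
    apply Finset.sum_eq_zero
    intro b _
    simp [Pi.single_eq_of_ne (castAdd_ne_natAdd j b)]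
  | right j =>
    rw [Finset.sum_eq_single j]
    · simp
    · intro b _ hb
      have hne : Fin.natAdd m j ≠ Fin.natAdd m b :=
        fun h => hb ((natAdd_injective h).symm ▸ rfl)
      simp [Pi.single_eq_of_ne hne]
    · simp

lemma stdW_eq : stdW m n = KW m n := by
  apply le_antisymm
  · rw [stdW, Submodule.span_le]
    rintro _ ⟨i, rfl⟩ j
    exact Pi.single_eq_of_ne (castAdd_ne_natAdd j i) 1
  · intro x hx
    rw [← sum_single_eq' x hx]
    exact Submodule.sum_mem _ fun i _ => Submodule.smul_mem _ _
      (Submodule.subset_span ⟨i, rfl⟩)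

lemma mem_stdU {x : Fin (m + n) → ℂ} : x ∈ stdU m n ↔ ∀ i : Fin n, x (Fin.natAdd m i) = 0 := by
  rw [stdU_eq]; rfl

lemma mem_stdW {x : Fin (m + n) → ℂ} : x ∈ stdW m n ↔ ∀ i : Fin m, x (Fin.castAdd n i) = 0 := by
  rw [stdW_eq]; rfl


noncomputable def prU (m n : ℕ) : (Fin (m + n) → ℂ) →ₗ[ℂ] (Fin (m + n) → ℂ) where
  toFun x := fun j => Fin.addCases (fun i => x (Fin.castAdd n i)) (fun _ => 0) j
  map_add' x y := by
    funext j
    induction j using Fin.addCases with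
    | left j => simp
    | right j => simp
  map_smul' c x := by
    funext j
    induction j using Fin.addCases with
    | left j => simp
    | right j => simp

noncomputable def prW (m n : ℕ) : (Fin (m + n) → ℂ) →ₗ[ℂ] (Fin (m + n) → ℂ) where
  toFun x := fun j => Fin.addCases (fun _ => 0) (fun i => x (Fin.natAdd m i)) j
  map_add' x y := by
    funext j
    induction j using Fin.addCases with
    | left j => simp
    | right j => simp
  map_smul' c x := by
    funext j
    induction j using Fin.addCases with
    | left j => simp
    | right j => simp

@[simp] lemma prU_castAdd (x : Fin (m+n) → ℂ) (i : Fin m) :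
    prU m n x (Fin.castAdd n i) = x (Fin.castAdd n i) := by simp [prU]
@[simp] lemma prU_natAdd (x : Fin (m+n) → ℂ) (i : Fin n) :
    prU m n x (Fin.natAdd m i) = 0 := by simp [prU]
@[simp] lemma prW_castAdd (x : Fin (m+n) → ℂ) (i : Fin m) :
    prW m n x (Fin.castAdd n i) = 0 := by simp [prW]
@[simp] lemma prW_natAdd (x : Fin (m+n) → ℂ) (i : Fin n) :
    prW m n x (Fin.natAdd m i) = x (Fin.natAdd m i) := by simp [prW]


end SLGL

namespace SLGL
variable {m n : ℕ}

lemma prU_mem (x : Fin (m+n) → ℂ) : prU m n x ∈ stdU m n := by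
  rw [mem_stdU]; intro i; simp

lemma prW_mem (x : Fin (m+n) → ℂ) : prW m n x ∈ stdW m n := by
  rw [mem_stdW]; intro i; simp

lemma prU_add_prW (x : Fin (m+n) → ℂ) : prU m n x + prW m n x = x := by
  funext j
  induction j using Fin.addCases with
  | left j => simp
  | right j => simp

lemma prU_eq_self {x : Fin (m+n) → ℂ} (hx : x ∈ stdU m n) : prU m n x = x := by
  rw [mem_stdU] at hx
  funext j
  induction j using Fin.addCases with
  | left j => simp
  | right j => simp [hx j]

lemma prW_eq_self {x : Fin (m+n) → ℂ} (hx : x ∈ stdW m n) : prW m n x = x := by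
  rw [mem_stdW] at hx
  funext j
  induction j using Fin.addCases with
  | left j => simp [hx j]
  | right j => simp

lemma prU_eq_zero {x : Fin (m+n) → ℂ} (hx : x ∈ stdW m n) : prU m n x = 0 := by
  rw [mem_stdW] at hx
  funext j
  induction j using Fin.addCases with
  | left j => simp [hx j]
  | right j => simp

lemma prW_eq_zero {x : Fin (m+n) → ℂ} (hx : x ∈ stdU m n) : prW m n x = 0 := by
  rw [mem_stdU] at hx
  funext j
  induction j using Fin.addCases with
  | left j => simp
  | right j => simp [hx j]

/-- existence of a dual functional vanishing on a submodule, 1 on a given vector outside it -/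
lemma exists_dual (p : Submodule ℂ (Fin (m+n) → ℂ)) (x : Fin (m+n) → ℂ) (hx : x ∉ p) :
    ∃ γ : (Fin (m+n) → ℂ) →ₗ[ℂ] ℂ, (∀ z ∈ p, γ z = 0) ∧ γ x = 1 := by
  have hq : p.mkQ x ≠ 0 := by
    simpa [Submodule.Quotient.mk_eq_zero] using hx
  have : ¬ ∀ φ : Module.Dual ℂ ((Fin (m+n) → ℂ) ⧸ p), φ (p.mkQ x) = 0 := by
    rw [Module.forall_dual_apply_eq_zero_iff]
    exact hq
  push_neg at this
  obtain ⟨φ, hφ⟩ := this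
  refine ⟨(φ (p.mkQ x))⁻¹ • (φ ∘ₗ p.mkQ), fun z hz => ?_, ?_⟩
  · have h0 : p.mkQ z = 0 := (Submodule.Quotient.mk_eq_zero p).mpr hz
    simp [h0]
  · simp only [LinearMap.smul_apply, LinearMap.coe_comp, Function.comp_apply, smul_eq_mul]
    exact inv_mul_cancel₀ (by simpa using hφ)

end SLGL

namespace SLGL
variable {m n : ℕ}

lemma stdU_inf_stdW {x : Fin (m+n) → ℂ} (hU : x ∈ stdU m n) (hW : x ∈ stdW m n) : x = 0 := by
  rw [mem_stdU] at hU; rw [mem_stdW] at hW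
  funext j
  induction j using Fin.addCases with
  | left j => simp [hW j]
  | right j => simp [hU j]

lemma exists_vwab (hm : 0 < m) (k : ℕ) (Wc : Fin (k + 1) → Submodule ℂ (Fin (m + n) → ℂ))
    (hmono : Monotone Wc) (hlast : Wc (Fin.last k) = ⊤) :
    ∃ (v w : Fin (m+n) → ℂ) (α β : (Fin (m+n) → ℂ) →ₗ[ℂ] ℂ),
      v ∈ stdU m n ∧ w ∈ stdW m n ∧
      (∀ z ∈ stdW m n, α z = 0) ∧ (∀ z ∈ stdU m n, β z = 0) ∧
      α v = 1 ∧ (β w = 1 ∨ w = 0) ∧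
      (∀ j, ∀ z ∈ Wc j, α z • v + β z • w ∈ Wc j) := by
  classical
  have hfin : ∀ j : ℕ, min j k < k + 1 := fun j => Nat.lt_succ_of_le (Nat.min_le_right j k)
  have hmk : ∀ (j : ℕ) (hj : j ≤ k), (⟨min j k, hfin j⟩ : Fin (k+1)) = ⟨j, by omega⟩ :=
    fun j hj => Fin.ext (by simp [Nat.min_eq_left hj])
  have hmkk : (⟨min k k, hfin k⟩ : Fin (k+1)) = Fin.last k :=
    Fin.ext (by simp [Fin.last])
  have htop : ¬ ((⊤ : Submodule ℂ (Fin (m+n) → ℂ)) ≤ stdW m n) := by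
    intro h
    have h2 := h (Submodule.mem_top (x := (Pi.single (Fin.castAdd n ⟨0, hm⟩) 1 : Fin (m+n) → ℂ)))
    rw [mem_stdW] at h2
    have := h2 ⟨0, hm⟩
    simp at this
  have hex : ∃ j : ℕ, ¬ (Wc ⟨min j k, hfin j⟩ ≤ stdW m n) := by
    refine ⟨k, ?_⟩
    rw [hmkk, hlast]
    exact htop
  set jn := Nat.find hex with hjn
  have hjnk : jn ≤ k := by
    apply Nat.find_min' hex
    rw [hmkk, hlast]
    exact htop
  set jstar : Fin (k+1) := ⟨jn, by omega⟩ with hjstar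
  have hxstar : ¬ (Wc jstar ≤ stdW m n) := by
    have h := Nat.find_spec hex
    rwa [hmk jn hjnk] at h
  have hmin : ∀ j : Fin (k+1), (j : ℕ) < jn → Wc j ≤ stdW m n := by
    intro j hj
    have h := Nat.find_min hex (m := (j : ℕ)) hj
    rw [not_not, hmk (j:ℕ) (by omega)] at h
    convert h using 2
  rw [SetLike.le_def] at hxstar
  push_neg at hxstar
  obtain ⟨x₀, hx₀W, hx₀⟩ := hxstar
  set v := prU m n x₀ with hv
  set w := prW m n x₀ with hw
  have hvU : v ∈ stdU m n := prU_mem x₀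
  have hwW : w ∈ stdW m n := prW_mem x₀
  have hx₀vw : v + w = x₀ := prU_add_prW x₀
  have hv0 : v ≠ 0 := by
    intro h
    apply hx₀
    have : x₀ = w := by rw [← hx₀vw, h, zero_add]
    rw [this]; exact hwW
  by_cases hcase : w ∈ Wc jstar
  · -- case (a)
    have hvin : v ∈ Wc jstar := by
      have : v = x₀ - w := by rw [← hx₀vw]; abel
      rw [this]; exact Submodule.sub_mem _ hx₀W hcase
    have hvnW : v ∉ stdW m n := fun h => hv0 (stdU_inf_stdW hvU h)
    obtain ⟨α, hα0, hα1⟩ := exists_dual (stdW m n) v hvnW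
    refine ⟨v, 0, α, 0, hvU, Submodule.zero_mem _, hα0, fun z _ => rfl, hα1, Or.inr rfl, ?_⟩
    intro j z hz
    simp only [LinearMap.zero_apply, zero_smul, smul_zero, add_zero]
    by_cases hj : (j : ℕ) < jn
    · have : α z = 0 := hα0 z ((hmin j hj) hz)
      rw [this, zero_smul]; exact Submodule.zero_mem _
    · have hle : jstar ≤ j := by
        rw [Fin.le_def]
        simpa [hjstar] using Nat.le_of_not_lt hj
      exact Submodule.smul_mem _ _ (hmono hle hvin)
  · -- case (b)
    have hex2 : ∃ j : ℕ, w ∈ Wc ⟨min j k, hfin j⟩ := by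
      refine ⟨k, ?_⟩
      rw [hmkk, hlast]
      exact Submodule.mem_top
    set jn2 := Nat.find hex2 with hjn2
    have hjn2k : jn2 ≤ k := by
      apply Nat.find_min' hex2
      rw [hmkk, hlast]
      exact Submodule.mem_top
    have hwin : w ∈ Wc ⟨jn2, by omega⟩ := by
      have h := Nat.find_spec hex2
      rwa [hmk jn2 hjn2k] at h
    have hmin2 : ∀ j : Fin (k+1), (j : ℕ) < jn2 → w ∉ Wc j := by
      intro j hj hmem
      apply Nat.find_min hex2 (m := (j:ℕ)) hj
      rw [hmk (j:ℕ) (by omega)]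
      convert hmem using 2
    have hjnlt : jn < jn2 := by
      by_contra h
      push_neg at h
      refine hcase (hmono (show (⟨jn2, by omega⟩ : Fin (k+1)) ≤ jstar from ?_) hwin)
      rw [Fin.le_def]
      simpa [hjstar] using h
    -- F = Wc (jn2 - 1)
    set F : Submodule ℂ (Fin (m+n) → ℂ) := Wc ⟨jn2 - 1, by omega⟩ with hF
    have hx₀F : x₀ ∈ F := by
      refine hmono (show jstar ≤ (⟨jn2 - 1, by omega⟩ : Fin (k+1)) from ?_) hx₀W
      rw [Fin.le_def]
      simp [hjstar]; omega
    have hwF : w ∉ F := hmin2 _ (by simp; omega)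
    -- G = (prU - prW) F
    set G : Submodule ℂ (Fin (m+n) → ℂ) := F.map (prU m n - prW m n) with hG
    have hvG : v ∉ G := by
      rintro ⟨z, hzF, hzv⟩
      simp only [LinearMap.sub_apply] at hzv
      have hprW : prW m n z = 0 := by
        have h1 := congrArg (prW m n) hzv
        rw [map_sub] at h1
        have e1 : prW m n (prU m n z) = 0 := prW_eq_zero (prU_mem z)
        have e2 : prW m n (prW m n z) = prW m n z := prW_eq_self (prW_mem z)
        have e3 : prW m n v = 0 := prW_eq_zero hvU
        rw [e1, e2, e3, zero_sub, neg_eq_zero] at h1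
        exact h1
      have hzU : prU m n z = z := by
        have := prU_add_prW z
        rw [hprW, add_zero] at this
        exact this
      have hzv' : z = v := by rwa [hzU, hprW, sub_zero] at hzv
      apply hwF
      have : w = x₀ - v := by rw [← hx₀vw]; abel
      rw [this]
      exact Submodule.sub_mem _ hx₀F (hzv' ▸ hzF)
    obtain ⟨γ, hγ0, hγ1⟩ := exists_dual G v hvG
    have hγw : γ w = 1 := by
      have hvwG : v - w ∈ G := ⟨x₀, hx₀F, by
        simp only [LinearMap.sub_apply, hv, hw]⟩
      have := hγ0 _ hvwG
      rw [map_sub] at this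
      have := sub_eq_zero.mp this
      rw [← this, hγ1]
    refine ⟨v, w, γ ∘ₗ prU m n, γ ∘ₗ prW m n, hvU, hwW, ?_, ?_, ?_, Or.inl ?_, ?_⟩
    · intro z hz
      simp only [LinearMap.comp_apply]
      rw [prU_eq_zero hz, map_zero]
    · intro z hz
      simp only [LinearMap.comp_apply]
      rw [prW_eq_zero hz, map_zero]
    · simp only [LinearMap.comp_apply]
      rw [prU_eq_self hvU, hγ1]
    · simp only [LinearMap.comp_apply]
      rw [prW_eq_self hwW, hγw]
    · intro j z hz
      simp only [LinearMap.comp_apply]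
      by_cases hj2 : (j : ℕ) < jn2
      · have hzF : z ∈ F := by
          refine hmono (show j ≤ (⟨jn2 - 1, by omega⟩ : Fin (k+1)) from ?_) hz
          rw [Fin.le_def]; simp; omega
        have heq : γ (prU m n z) = γ (prW m n z) := by
          have : prU m n z - prW m n z ∈ G := ⟨z, hzF, by simp [LinearMap.sub_apply]⟩
          have h0 := hγ0 _ this
          rw [map_sub] at h0
          exact sub_eq_zero.mp h0
        rw [← heq, ← smul_add, hx₀vw]
        by_cases hj : (j : ℕ) < jn
        · have hzW : z ∈ stdW m n := (hmin j hj) hz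
          rw [prU_eq_zero hzW, map_zero, zero_smul]
          exact Submodule.zero_mem _
        · refine Submodule.smul_mem _ _ (hmono (show jstar ≤ j from ?_) hx₀W)
          rw [Fin.le_def]
          simpa [hjstar] using Nat.le_of_not_lt hj
      · have hwj : w ∈ Wc j := by
          refine hmono (show (⟨jn2, by omega⟩ : Fin (k+1)) ≤ j from ?_) hwin
          rw [Fin.le_def]; simp; omega
        have hx₀j : x₀ ∈ Wc j := by
          refine hmono (show jstar ≤ j from ?_) hx₀W
          rw [Fin.le_def]; simp [hjstar]; omega
        have hvj : v ∈ Wc j := by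
          have : v = x₀ - w := by rw [← hx₀vw]; abel
          rw [this]; exact Submodule.sub_mem _ hx₀j hwj
        exact Submodule.add_mem _ (Submodule.smul_mem _ _ hvj) (Submodule.smul_mem _ _ hwj)

end SLGL

namespace SLGL
variable {m n : ℕ}

open Matrix in
lemma exists_sec (m n : ℕ) (k : ℕ) (Wc : Fin (k + 1) → Submodule ℂ (Fin (m + n) → ℂ))
    (hmono : Monotone Wc) (hlast : Wc (Fin.last k) = ⊤) :
    ∃ Pm : Matrix (Fin (m+n)) (Fin (m+n)) ℂ,
      Pm * Pm = Pm ∧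
      (∀ z ∈ stdU m n, Pm.mulVec z ∈ stdU m n) ∧
      (∀ z ∈ stdW m n, Pm.mulVec z ∈ stdW m n) ∧
      (∀ j, ∀ z ∈ Wc j, Pm.mulVec z ∈ Wc j) ∧
      ((∀ lam : ℂ, ((1 + (lam - 1) • Pm).submatrix (Fin.castAdd n) (Fin.castAdd n)).det = lam)
        ∨ (∀ g : Matrix (Fin (m+n)) (Fin (m+n)) ℂ,
            (g.submatrix (Fin.castAdd n) (Fin.castAdd n)).det = 1)) := by
  rcases Nat.eq_zero_or_pos m with hm | hm
  · subst hm
    refine ⟨0, by rw [mul_zero], ?_, ?_, ?_, Or.inr ?_⟩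
    · intro z _; rw [Matrix.zero_mulVec]; exact Submodule.zero_mem _
    · intro z _; rw [Matrix.zero_mulVec]; exact Submodule.zero_mem _
    · intro j z _; rw [Matrix.zero_mulVec]; exact Submodule.zero_mem _
    · intro g
      exact Matrix.det_isEmpty
  · obtain ⟨v, w, α, β, hvU, hwW, hαW, hβU, hαv, hβw, hflag⟩ :=
      exists_vwab hm k Wc hmono hlast
    set P : (Fin (m+n) → ℂ) →ₗ[ℂ] (Fin (m+n) → ℂ) :=
      LinearMap.smulRight α v + LinearMap.smulRight β w with hP
    have hPapp : ∀ z, P z = α z • v + β z • w := fun z => rfl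
    set Pm := LinearMap.toMatrix' P with hPm
    have hPmv : ∀ z, Pm.mulVec z = P z := by
      intro z
      rw [← Matrix.toLin'_apply, hPm, Matrix.toLin'_toMatrix']
    have hαw : α w = 0 := hαW w hwW
    have hβv : β v = 0 := hβU v hvU
    have hPP : P ∘ₗ P = P := by
      apply LinearMap.ext
      intro z
      simp only [LinearMap.comp_apply, hPapp, map_add, _root_.map_smul, smul_eq_mul,
        hαv, hαw, hβv]
      rcases hβw with h1 | h0
      · rw [h1]
        simp [hαv]
      · rw [h0]
        simp [hαv]
    refine ⟨Pm, ?_, ?_, ?_, ?_, Or.inl ?_⟩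
    · rw [hPm, ← LinearMap.toMatrix'_comp, hPP]
    · intro z hz
      rw [hPmv, hPapp, hβU z hz, zero_smul, add_zero]
      exact Submodule.smul_mem _ _ hvU
    · intro z hz
      rw [hPmv, hPapp, hαW z hz, zero_smul, zero_add]
      exact Submodule.smul_mem _ _ hwW
    · intro j z hz
      rw [hPmv, hPapp]
      exact hflag j z hz
    · intro lam
      have hsub : Pm.submatrix (Fin.castAdd n) (Fin.castAdd n) =
          Matrix.replicateCol Unit (fun i => v (Fin.castAdd n i)) *
            Matrix.replicateRow Unit (fun j => α (Pi.single (Fin.castAdd n j) 1)) := by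
        ext i j
        rw [Matrix.submatrix_apply, hPm, LinearMap.toMatrix'_apply]
        have hsingle : (fun j' => if j' = Fin.castAdd n j then (1:ℂ) else 0) =
            Pi.single (Fin.castAdd n j) 1 := by
          funext j'
          rw [Pi.single_apply]
        rw [hPapp]
        have hw0 : w (Fin.castAdd n i) = 0 := (mem_stdW.mp hwW) i
        simp [Matrix.mul_apply, hw0, mul_comm]
      have hone : ((1 : Matrix (Fin (m+n)) (Fin (m+n)) ℂ).submatrix (Fin.castAdd n)
          (Fin.castAdd n)) = 1 :=
        Matrix.submatrix_one _ (Fin.castAdd_injective m n)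
      have hexpand : ((1 + (lam - 1) • Pm).submatrix (Fin.castAdd n) (Fin.castAdd n)) =
          1 + (lam - 1) • (Pm.submatrix (Fin.castAdd n) (Fin.castAdd n)) := by
        ext i j
        simp only [Matrix.submatrix_apply, Matrix.add_apply, Matrix.smul_apply]
        rw [← hone]
        simp [Matrix.submatrix_apply]
      rw [hexpand, hsub, ← Matrix.smul_mul, ← Matrix.replicateCol_smul,
        Matrix.det_one_add_replicateCol_mul_replicateRow]
      have hdot : (fun j => α (Pi.single (Fin.castAdd n j) (1:ℂ))) ⬝ᵥ
          (fun i => v (Fin.castAdd n i)) = 1 := by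
        have hsum : α v = ∑ i : Fin m, v (Fin.castAdd n i) * α (Pi.single (Fin.castAdd n i) 1) := by
          conv_lhs => rw [← sum_single_eq v (mem_stdU.mp hvU)]
          rw [map_sum]
          exact Finset.sum_congr rfl fun i _ => by rw [_root_.map_smul, smul_eq_mul]
        have h2 : (∑ x : Fin m, α (Pi.single (Fin.castAdd n x) (1:ℂ)) * v (Fin.castAdd n x))
            = α v := by
          rw [hsum]
          exact Finset.sum_congr rfl fun i _ => mul_comm _ _
        simp only [dotProduct]
        rw [h2, hαv]
      rw [dotProduct_smul, hdot, smul_eq_mul, mul_one]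
      ring
end SLGL

namespace SLGL
open Matrix
variable {m n : ℕ}

lemma block21_zero (g : Matrix (Fin (m+n)) (Fin (m+n)) ℂ)
    (h : ∀ z ∈ stdU m n, g.mulVec z ∈ stdU m n) (i : Fin n) (j : Fin m) :
    g (Fin.natAdd m i) (Fin.castAdd n j) = 0 := by
  have hz : (Pi.single (Fin.castAdd n j) 1 : Fin (m+n) → ℂ) ∈ stdU m n :=
    Submodule.subset_span ⟨j, rfl⟩
  have := (mem_stdU.mp (h _ hz)) i
  rw [Matrix.mulVec_single] at this
  simpa using this

lemma block12_zero (g : Matrix (Fin (m+n)) (Fin (m+n)) ℂ)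
    (h : ∀ z ∈ stdW m n, g.mulVec z ∈ stdW m n) (i : Fin m) (j : Fin n) :
    g (Fin.castAdd n i) (Fin.natAdd m j) = 0 := by
  have hz : (Pi.single (Fin.natAdd m j) 1 : Fin (m+n) → ℂ) ∈ stdW m n :=
    Submodule.subset_span ⟨j, rfl⟩
  have := (mem_stdW.mp (h _ hz)) i
  rw [Matrix.mulVec_single] at this
  simpa using this

lemma det_blocks (g : Matrix (Fin (m+n)) (Fin (m+n)) ℂ)
    (h21 : ∀ (i : Fin n) (j : Fin m), g (Fin.natAdd m i) (Fin.castAdd n j) = 0) :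
    g.det = (g.submatrix (Fin.castAdd n) (Fin.castAdd n)).det *
      (g.submatrix (Fin.natAdd m) (Fin.natAdd m)).det := by
  have he := Matrix.det_submatrix_equiv_self (finSumFinEquiv (m := m) (n := n)) g
  rw [← he]
  have : g.submatrix (⇑finSumFinEquiv) (⇑finSumFinEquiv) =
      Matrix.fromBlocks (g.submatrix (Fin.castAdd n) (Fin.castAdd n))
        (g.submatrix (Fin.castAdd n) (Fin.natAdd m)) 0
        (g.submatrix (Fin.natAdd m) (Fin.natAdd m)) := by
    ext i j
    cases i with
    | inl i =>
      cases j with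
      | inl j => simp
      | inr j => simp
    | inr i =>
      cases j with
      | inl j => simp [h21 i j]
      | inr j => simp
  rw [this, Matrix.det_fromBlocks_zero₂₁]

lemma detU_mul (x y : Matrix (Fin (m+n)) (Fin (m+n)) ℂ)
    (hy : ∀ (i : Fin n) (j : Fin m), y (Fin.natAdd m i) (Fin.castAdd n j) = 0) :
    ((x * y).submatrix (Fin.castAdd n) (Fin.castAdd n)).det =
      (x.submatrix (Fin.castAdd n) (Fin.castAdd n)).det *
        (y.submatrix (Fin.castAdd n) (Fin.castAdd n)).det := by
  rw [← Matrix.det_mul]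
  congr 1
  ext i j
  simp only [Matrix.submatrix_apply, Matrix.mul_apply]
  rw [Fin.sum_univ_add]
  have : ∑ i' : Fin n, x (Fin.castAdd n i) (Fin.natAdd m i') *
      y (Fin.natAdd m i') (Fin.castAdd n j) = 0 :=
    Finset.sum_eq_zero fun i' _ => by rw [hy i' j, mul_zero]
  rw [this, add_zero]

lemma map_eq_of_le (g : Matrix (Fin (m+n)) (Fin (m+n)) ℂ) (hdet : g.det ≠ 0)
    (p : Submodule ℂ (Fin (m+n) → ℂ)) (h : ∀ z ∈ p, Matrix.toLin' g z ∈ p) :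
    p.map (Matrix.toLin' g) = p := by
  have hunit : IsUnit g.det := isUnit_iff_ne_zero.mpr hdet
  have hinv : g⁻¹ * g = 1 := Matrix.nonsing_inv_mul g hunit
  have hinj : Function.Injective (Matrix.toLin' g) := by
    intro a b hab
    have : Matrix.toLin' (g⁻¹ * g) a = Matrix.toLin' (g⁻¹ * g) b := by
      rw [Matrix.toLin'_mul]
      simp only [LinearMap.comp_apply]
      rw [hab]
    rwa [hinv, Matrix.toLin'_one] at this
  have hsurj : Function.Surjective (Matrix.toLin' g) :=
    (LinearMap.injective_iff_surjective).mp hinj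
  set e : (Fin (m+n) → ℂ) ≃ₗ[ℂ] (Fin (m+n) → ℂ) :=
    LinearEquiv.ofBijective (Matrix.toLin' g) ⟨hinj, hsurj⟩ with he
  have hle : p.map (Matrix.toLin' g) ≤ p := by
    rintro _ ⟨z, hz, rfl⟩
    exact h z hz
  apply Submodule.eq_of_le_of_finrank_le hle
  have : p.map (Matrix.toLin' g) = p.map (e : (Fin (m+n) → ℂ) →ₗ[ℂ] (Fin (m+n) → ℂ)) := rfl
  rw [this, LinearEquiv.finrank_map_eq]

end SLGL

namespace SLGL
open Matrix Polynomial
variable {m n : ℕ}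

lemma preconn_units (C : Set (Submodule ℂ (Fin (m+n) → ℂ))) :
    IsPreconnected {g : Matrix (Fin (m+n)) (Fin (m+n)) ℂ |
      g.det ≠ 0 ∧ ∀ p ∈ C, ∀ z ∈ p, g.mulVec z ∈ p} := by
  apply isPreconnected_of_forall_pair
  intro x hx y hy
  set φ : ℂ → Matrix (Fin (m+n)) (Fin (m+n)) ℂ := fun t => x + t • (y - x) with hφ
  have hφcont : Continuous φ := continuous_const.add (continuous_id.smul continuous_const)
  set q : Polynomial ℂ :=
    ((x.map Polynomial.C) + (Polynomial.X : Polynomial ℂ) • ((y - x).map Polynomial.C)).det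
    with hq
  have heval : ∀ t : ℂ, Polynomial.eval t q = (φ t).det := by
    intro t
    have h1 := RingHom.map_det (Polynomial.evalRingHom t)
      ((x.map Polynomial.C) + (Polynomial.X : Polynomial ℂ) • ((y - x).map Polynomial.C))
    rw [hq]
    rw [show Polynomial.eval t = (Polynomial.evalRingHom t : Polynomial ℂ → ℂ) from rfl]
    rw [h1]
    congr 1
    ext i j
    simp [Matrix.map_apply, Matrix.add_apply, Matrix.smul_apply, smul_eq_mul, hφ,
      Matrix.sub_apply, mul_comm]
  have hq0 : q ≠ 0 := by
    intro h
    apply hx.1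
    have := heval 0
    rw [h] at this
    simp only [Polynomial.eval_zero] at this
    rw [show φ 0 = x from by simp [hφ]] at this
    exact this.symm
  set Ω : Set ℂ := {t : ℂ | Polynomial.eval t q ≠ 0} with hΩdef
  have hΩ : IsPreconnected Ω := by
    have hfin : Set.Finite {t : ℂ | Polynomial.IsRoot q t} := Polynomial.finite_setOf_isRoot hq0
    have hpath : IsPathConnected ({t : ℂ | Polynomial.IsRoot q t})ᶜ :=
      Set.Countable.isPathConnected_compl_of_one_lt_rank
        (by rw [Complex.rank_real_complex]; exact Cardinal.one_lt_two) hfin.countable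
    have : Ω = ({t : ℂ | Polynomial.IsRoot q t})ᶜ := by
      ext t
      simp [hΩdef, Polynomial.IsRoot]
    rw [this]
    exact hpath.isConnected.isPreconnected
  refine ⟨φ '' Ω, ?_, ⟨0, ?_, by simp [hφ]⟩, ⟨1, ?_, by simp [hφ]⟩, hΩ.image φ hφcont.continuousOn⟩
  · rintro _ ⟨t, ht, rfl⟩
    refine ⟨by rw [← heval t]; exact ht, ?_⟩
    intro p hp z hz
    have : (φ t).mulVec z = x.mulVec z + t • (y.mulVec z - x.mulVec z) := by
      rw [hφ]
      simp only [Matrix.add_mulVec, Matrix.smul_mulVec, Matrix.sub_mulVec]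
    rw [this]
    exact Submodule.add_mem _ (hx.2 p hp z hz)
      (Submodule.smul_mem _ _ (Submodule.sub_mem _ (hy.2 p hp z hz) (hx.2 p hp z hz)))
  · rw [hΩdef, Set.mem_setOf_eq, heval 0]
    rw [show φ 0 = x from by simp [hφ]]
    exact hx.1
  · rw [hΩdef, Set.mem_setOf_eq, heval 1]
    rw [show φ 1 = y from by simp [hφ]]
    exact hy.1

end SLGL


/-- The subgroup `SL(m) × GL(n) ⊂ GL(m+n)` is parabolically connected: its intersection with
the stabilizer of any chain of subspaces of `ℂ^{m+n}` is connected. Here `det(g|_U) = 1` is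
expressed via the determinant of the top-left `m × m` block, which represents `g|_U` in the
standard basis of `U` when `g` preserves `U` and `W`. -/
theorem slgl_parabolically_connected (m n : ℕ) :
    ∀ (k : ℕ) (Wc : Fin (k + 1) → Submodule ℂ (Fin (m + n) → ℂ)),
      Monotone Wc → Wc 0 = ⊥ → Wc (Fin.last k) = ⊤ →
      IsConnected {g : Matrix (Fin (m + n)) (Fin (m + n)) ℂ |
        IsUnit g.det ∧
        (stdU m n).map (Matrix.toLin' g) = stdU m n ∧
        (stdW m n).map (Matrix.toLin' g) = stdW m n ∧
        (g.submatrix (Fin.castAdd n) (Fin.castAdd n)).det = 1 ∧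
        ∀ j : Fin (k + 1), (Wc j).map (Matrix.toLin' g) = Wc j} := by
  intro k Wc hmono h0 hlast
  classical
  obtain ⟨Pm, hPP, hPU, hPW, hPflag, hdet⟩ := SLGL.exists_sec m n k Wc hmono hlast
  set S : Set (Matrix (Fin (m + n)) (Fin (m + n)) ℂ) :=
    {g : Matrix (Fin (m + n)) (Fin (m + n)) ℂ |
      IsUnit g.det ∧
      (stdU m n).map (Matrix.toLin' g) = stdU m n ∧
      (stdW m n).map (Matrix.toLin' g) = stdW m n ∧
      (g.submatrix (Fin.castAdd n) (Fin.castAdd n)).det = 1 ∧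
      ∀ j : Fin (k + 1), (Wc j).map (Matrix.toLin' g) = Wc j} with hS
  set C : Set (Submodule ℂ (Fin (m+n) → ℂ)) := {stdU m n, stdW m n} ∪ Set.range Wc with hC
  set T : Set (Matrix (Fin (m + n)) (Fin (m + n)) ℂ) :=
    {g : Matrix (Fin (m + n)) (Fin (m + n)) ℂ |
      g.det ≠ 0 ∧ ∀ p ∈ C, ∀ z ∈ p, g.mulVec z ∈ p} with hT
  set D : Matrix (Fin (m + n)) (Fin (m + n)) ℂ → ℂ :=
    fun g => (g.submatrix (Fin.castAdd n) (Fin.castAdd n)).det with hD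
  set c : ℂ → Matrix (Fin (m + n)) (Fin (m + n)) ℂ :=
    fun lam => 1 + (lam - 1) • Pm with hc
  set f : Matrix (Fin (m + n)) (Fin (m + n)) ℂ → Matrix (Fin (m + n)) (Fin (m + n)) ℂ :=
    fun g => g * c ((D g)⁻¹) with hf
  -- basic facts about c
  have hcmul : ∀ a b : ℂ, c a * c b = c (a * b) := by
    intro a b
    rw [hc]
    simp only [add_mul, mul_add, one_mul, mul_one, Matrix.smul_mul, Matrix.mul_smul, hPP,
      smul_smul]
    module
  have hc1 : c 1 = 1 := by rw [hc]; simp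
  have hcdet : ∀ lam : ℂ, lam ≠ 0 → (c lam).det ≠ 0 := by
    intro lam hlam
    have : c lam * c lam⁻¹ = 1 := by rw [hcmul, mul_inv_cancel₀ hlam, hc1]
    have hdet1 : (c lam).det * (c lam⁻¹).det = 1 := by
      rw [← Matrix.det_mul, this, Matrix.det_one]
    intro h
    rw [h, zero_mul] at hdet1
    exact zero_ne_one hdet1
  have hcpres : ∀ (lam : ℂ), ∀ p ∈ C, ∀ z ∈ p, (c lam).mulVec z ∈ p := by
    intro lam p hp z hz
    have hexp : (c lam).mulVec z = z + (lam - 1) • Pm.mulVec z := by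
      rw [hc]
      simp only [Matrix.add_mulVec, Matrix.one_mulVec, Matrix.smul_mulVec]
    rw [hexp]
    rcases hp with (rfl | rfl) | ⟨j, rfl⟩
    · exact Submodule.add_mem _ hz (Submodule.smul_mem _ _ (hPU z hz))
    · exact Submodule.add_mem _ hz (Submodule.smul_mem _ _ (hPW z hz))
    · exact Submodule.add_mem _ hz (Submodule.smul_mem _ _ (hPflag j z hz))
  have hDne : ∀ g ∈ T, D g ≠ 0 := by
    intro g hg
    have h21 : ∀ (i : Fin n) (j : Fin m), g (Fin.natAdd m i) (Fin.castAdd n j) = 0 :=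
      SLGL.block21_zero g (hg.2 (stdU m n) (Or.inl (Or.inl rfl)))
    have hdb := SLGL.det_blocks g h21
    intro hD0
    apply hg.1
    rw [hdb, show (g.submatrix (Fin.castAdd n) (Fin.castAdd n)).det = 0 from hD0, zero_mul]
  -- f maps T into S
  have hfTS : ∀ g ∈ T, f g ∈ S := by
    intro g hg
    have hmu : (D g)⁻¹ ≠ 0 := inv_ne_zero (hDne g hg)
    have hgc21 : ∀ (i : Fin n) (j : Fin m),
        (c ((D g)⁻¹)) (Fin.natAdd m i) (Fin.castAdd n j) = 0 :=
      SLGL.block21_zero _ (hcpres _ (stdU m n) (Or.inl (Or.inl rfl)))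
    have hfdet : (f g).det ≠ 0 := by
      rw [hf]
      simp only [Matrix.det_mul]
      exact mul_ne_zero hg.1 (hcdet _ hmu)
    have hfpres : ∀ p ∈ C, ∀ z ∈ p, (f g).mulVec z ∈ p := by
      intro p hp z hz
      rw [hf]
      simp only
      rw [← Matrix.mulVec_mulVec]
      exact hg.2 p hp _ (hcpres _ p hp z hz)
    have hfD : D (f g) = 1 := by
      rw [hf, hD]
      simp only
      rw [SLGL.detU_mul g _ hgc21]
      rcases hdet with hdet | hdet
      · rw [show ((c ((D g)⁻¹)).submatrix (Fin.castAdd n) (Fin.castAdd n)).det = (D g)⁻¹ from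
          hdet ((D g)⁻¹)]
        exact mul_inv_cancel₀ (hDne g hg)
      · rw [hdet g, hdet (c ((D g)⁻¹)), mul_one]
    refine ⟨isUnit_iff_ne_zero.mpr hfdet, ?_, ?_, hfD, ?_⟩
    · exact SLGL.map_eq_of_le _ hfdet _ (fun z hz => by
        rw [Matrix.toLin'_apply]; exact hfpres (stdU m n) (Or.inl (Or.inl rfl)) z hz)
    · exact SLGL.map_eq_of_le _ hfdet _ (fun z hz => by
        rw [Matrix.toLin'_apply]; exact hfpres (stdW m n) (Or.inl (Or.inr rfl)) z hz)
    · intro j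
      exact SLGL.map_eq_of_le _ hfdet _ (fun z hz => by
        rw [Matrix.toLin'_apply]; exact hfpres (Wc j) (Or.inr ⟨j, rfl⟩) z hz)
  -- S ⊆ T and f is identity on S
  have hST : ∀ g ∈ S, g ∈ T ∧ f g = g := by
    intro g hg
    obtain ⟨hu, hU, hW, hD1, hflag⟩ := hg
    have hgdet : g.det ≠ 0 := by
      intro h
      rw [h] at hu
      simp at hu
    have hgT : g ∈ T := by
      refine ⟨hgdet, ?_⟩
      intro p hp z hz
      have hmem : ∀ (pp : Submodule ℂ (Fin (m+n) → ℂ)), pp.map (Matrix.toLin' g) = pp →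
          g.mulVec z ∈ pp → True := fun _ _ _ => trivial
      rcases hp with (rfl | rfl) | ⟨j, rfl⟩
      · rw [← hU]; exact ⟨z, hz, (Matrix.toLin'_apply g z)⟩
      · rw [← hW]; exact ⟨z, hz, (Matrix.toLin'_apply g z)⟩
      · rw [← hflag j]; exact ⟨z, hz, (Matrix.toLin'_apply g z)⟩
    refine ⟨hgT, ?_⟩
    rw [hf]
    simp only
    rw [show D g = 1 from hD1, inv_one, hc1, mul_one]
  -- S = f '' T
  have hSimage : S = f '' T := by
    apply Set.Subset.antisymm
    · intro g hg
      exact ⟨g, (hST g hg).1, (hST g hg).2⟩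
    · rintro _ ⟨g, hg, rfl⟩
      exact hfTS g hg
  -- continuity of f on T
  have hDcont : Continuous D := by
    rw [hD]
    exact (continuous_id.matrix_submatrix _ _).matrix_det
  have hfcont : ContinuousOn f T := by
    have hinv : ContinuousOn (fun g => (D g)⁻¹) T :=
      ContinuousOn.inv₀ hDcont.continuousOn hDne
    have hcc : ContinuousOn (fun g => c ((D g)⁻¹)) T := by
      rw [hc]
      simp only
      exact continuousOn_const.add (((hinv.sub continuousOn_const)).smul continuousOn_const)
    exact (continuousOn_id).mul hcc
  -- conclude
  have h1S : (1 : Matrix (Fin (m + n)) (Fin (m + n)) ℂ) ∈ T := by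
    refine ⟨by rw [Matrix.det_one]; exact one_ne_zero, ?_⟩
    intro p hp z hz
    rwa [Matrix.one_mulVec]
  constructor
  · exact ⟨f 1, hSimage ▸ ⟨1, h1S, rfl⟩⟩
  · rw [hSimage]
    exact (SLGL.preconn_units C).image f hfcont
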